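/- Let H be a real inner product space and F : H → ℝ convex, differentiable with L-Lipschitz gradient, and suppose F(0) ≤ B for some B ≥ 0 and F is nonnegative. Let f₁ = 0 and f_{t+1} = f_t − η_t ∇F(f_t) with 0 < η_t ≤ 1/L. Then ‖f_{t+1}‖² ≤ 2B ∑_{k=1}^{t} η_k for all t ≥ 1. -/

import Mathlib

open RealInnerProductSpace

lemma gd_lineDeriv {H : Type*} [NormedAddCommGroup H] [InnerProductSpace ℝ H]
    {F : H → ℝ} {g : H → H} (hgrad : ∀ x : H, HasFDerivAt F (innerSL ℝ (g x)) x)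
    (x v : H) (t : ℝ) :
    HasDerivAt (fun s : ℝ => F (x + s • v)) ⟪g (x + t • v), v⟫ t := by
  have hline : HasDerivAt (fun s : ℝ => x + s • v) v t :=
    by simpa using ((hasDerivAt_id t).smul_const v).const_add x
  exact (hgrad (x + t • v)).comp_hasDerivAt t hline

lemma gd_convex_grad_ineq {H : Type*} [NormedAddCommGroup H] [InnerProductSpace ℝ H]
    {F : H → ℝ} {g : H → H} (hconv : ConvexOn ℝ Set.univ F)
    (hgrad : ∀ x : H, HasFDerivAt F (innerSL ℝ (g x)) x) (x y : H) :
    F x + ⟪g x, y - x⟫ ≤ F y := by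
  have hφ : ConvexOn ℝ Set.univ (fun s : ℝ => F (x + s • (y - x))) := by
    have h1 := hconv.comp_affineMap (AffineMap.lineMap x y)
    simp only [Set.preimage_univ] at h1
    have : (F ∘ (AffineMap.lineMap x y)) = (fun s : ℝ => F (x + s • (y - x))) := by
      funext s
      simp only [Function.comp_apply]
      congr 1
      rw [AffineMap.lineMap_apply_module]
      module
    rwa [this] at h1
  have hd := gd_lineDeriv hgrad x (y - x) 0
  have h := hφ.le_slope_of_hasDerivAt (Set.mem_univ (0:ℝ)) (Set.mem_univ (1:ℝ))
    zero_lt_one (by simpa using hd)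
  simp [slope_def_field] at h
  linarith

lemma gd_descent {H : Type*} [NormedAddCommGroup H] [InnerProductSpace ℝ H]
    {F : H → ℝ} {g : H → H} {L : ℝ}
    (hgrad : ∀ x : H, HasFDerivAt F (innerSL ℝ (g x)) x)
    (hlip : ∀ x y : H, ‖g x - g y‖ ≤ L * ‖x - y‖) (x v : H) :
    F (x + v) ≤ F x + ⟪g x, v⟫ + L / 2 * ‖v‖ ^ 2 := by
  set ψ : ℝ → ℝ := fun t => F (x + t • v) - t * ⟪g x, v⟫ - L * ‖v‖ ^ 2 * t ^ 2 / 2 with hψ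
  have hd : ∀ t : ℝ, HasDerivAt ψ (⟪g (x + t • v), v⟫ - ⟪g x, v⟫ - L * ‖v‖ ^ 2 * t) t := by
    intro t
    have h1 := gd_lineDeriv hgrad x v t
    have h2 : HasDerivAt (fun t : ℝ => t * ⟪g x, v⟫) ⟪g x, v⟫ t := by
      simpa using (hasDerivAt_id t).mul_const ⟪g x, v⟫
    have h3 : HasDerivAt (fun t : ℝ => L * ‖v‖ ^ 2 * t ^ 2 / 2) (L * ‖v‖ ^ 2 * t) t := by
      have := ((hasDerivAt_pow 2 t).const_mul (L * ‖v‖ ^ 2)).div_const 2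
      rw [show L * ‖v‖ ^ 2 * t = L * ‖v‖ ^ 2 * (((2:ℕ):ℝ) * t ^ (2 - 1)) / 2 by ring]
      exact this
    exact (h1.sub h2).sub h3
  have hanti : AntitoneOn ψ (Set.Icc 0 1) := by
    apply antitoneOn_of_deriv_nonpos (convex_Icc 0 1)
    · exact fun t _ => ((hd t).continuousAt).continuousWithinAt
    · exact fun t _ => ((hd t).differentiableAt).differentiableWithinAt
    · intro t ht
      rw [interior_Icc] at ht
      rw [(hd t).deriv]
      have hineq : ⟪g (x + t • v), v⟫ - ⟪g x, v⟫ ≤ L * ‖v‖ ^ 2 * t := by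
        have := real_inner_le_norm (g (x + t • v) - g x) v
        have hl := hlip (x + t • v) x
        simp only [add_sub_cancel_left] at hl
        rw [norm_smul, Real.norm_eq_abs, abs_of_nonneg ht.1.le] at hl
        have := (inner_sub_left (𝕜 := ℝ) (g (x + t • v)) (g x) v) ▸ this
        nlinarith [norm_nonneg v, norm_nonneg (g (x + t • v) - g x),
          mul_le_mul_of_nonneg_right hl (norm_nonneg v)]
      linarith
  have h01 := hanti (Set.left_mem_Icc.2 zero_le_one) (Set.right_mem_Icc.2 zero_le_one) zero_le_one
  simp only [hψ, one_smul, zero_smul, add_zero, one_mul, zero_mul, one_pow, mul_one] at h01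
  nlinarith [h01]

theorem gd_iterate_norm_bound
    {H : Type*} [NormedAddCommGroup H] [InnerProductSpace ℝ H]
    (F : H → ℝ) (g : H → H) (L B : ℝ) (hL : 0 < L) (hB : 0 ≤ B)
    (hconv : ConvexOn ℝ Set.univ F)
    (hgrad : ∀ x : H, HasFDerivAt F (innerSL ℝ (g x)) x)
    (hlip : ∀ x y : H, ‖g x - g y‖ ≤ L * ‖x - y‖)
    (hF0 : F 0 ≤ B) (hFpos : ∀ x, 0 ≤ F x)
    (η : ℕ → ℝ) (hη0 : ∀ t, 0 < η t) (hη1 : ∀ t, η t ≤ 1 / L)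
    (f : ℕ → H) (hf1 : f 1 = 0)
    (hstep : ∀ t : ℕ, f (t + 1) = f t - η t • g (f t)) :
    ∀ t : ℕ, 1 ≤ t → ‖f (t + 1)‖ ^ 2 ≤ 2 * B * ∑ k ∈ Finset.Icc 1 t, η k := by
  have key : ∀ t : ℕ, ‖f (t + 1)‖ ^ 2 ≤ ‖f t‖ ^ 2 + 2 * B * η t := by
    intro t
    set x := f t
    set e := η t with he
    have he0 : 0 < e := hη0 t
    have heL : e * L ≤ 1 := by
      have := hη1 t
      rw [le_div_iff₀ hL] at this
      linarith
    have hy : f (t + 1) = x - e • g x := hstep t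
    -- descent inequality
    have hdesc := gd_descent hgrad hlip x (-(e • g x))
    have hnorm_v : ‖-(e • g x)‖ ^ 2 = e ^ 2 * ‖g x‖ ^ 2 := by
      rw [norm_neg, norm_smul, Real.norm_eq_abs, abs_of_pos he0, mul_pow]
    have hinner_v : ⟪g x, -(e • g x)⟫ = -(e * ‖g x‖ ^ 2) := by
      rw [inner_neg_right, real_inner_smul_right, real_inner_self_eq_norm_sq]
    rw [hnorm_v, hinner_v] at hdesc
    have hxv : x + -(e • g x) = f (t + 1) := by rw [hy]; abel
    rw [hxv] at hdesc
    -- F (f (t+1)) ≤ F x - e/2 * ‖g x‖²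
    have hdesc2 : F (f (t + 1)) ≤ F x - e / 2 * ‖g x‖ ^ 2 := by
      have : L / 2 * (e ^ 2 * ‖g x‖ ^ 2) ≤ e / 2 * ‖g x‖ ^ 2 := by
        have h1 : L / 2 * (e ^ 2 * ‖g x‖ ^ 2) = (e * L) * (e / 2 * ‖g x‖ ^ 2) := by ring
        have h2 : 0 ≤ e / 2 * ‖g x‖ ^ 2 := by positivity
        rw [h1]
        nlinarith
      linarith
    -- convexity inequality
    have hcvx := gd_convex_grad_ineq hconv hgrad x 0
    have : ⟪g x, (0 : H) - x⟫ = -⟪g x, x⟫ := by rw [zero_sub, inner_neg_right]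
    rw [this] at hcvx
    -- norm expansion
    have hexp : ‖f (t + 1)‖ ^ 2 = ‖x‖ ^ 2 - 2 * e * ⟪x, g x⟫ + e ^ 2 * ‖g x‖ ^ 2 := by
      rw [hy, @norm_sub_sq_real, norm_smul, Real.norm_eq_abs, abs_of_pos he0,
        real_inner_smul_right, mul_pow]
      ring
    have hsym : ⟪x, g x⟫ = ⟪g x, x⟫ := real_inner_comm _ _
    have hFy := hFpos (f (t + 1))
    nlinarith [hdesc2, hcvx, hexp, hFy, he0, hF0]
  intro t ht
  induction t with
  | zero => omega
  | succ n ih =>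
    rcases Nat.eq_or_lt_of_le ht with h1 | h1
    · have hn : n = 0 := by omega
      subst hn
      have := key 1
      rw [hf1] at this
      simpa using this
    · have hn : 1 ≤ n := by omega
      have hsum : ∑ k ∈ Finset.Icc 1 (n + 1), η k = (∑ k ∈ Finset.Icc 1 n, η k) + η (n + 1) :=
        Finset.sum_Icc_succ_top (by omega) η
      have := key (n + 1)
      have hih := ih hn
      rw [hsum]
      nlinarith [hη0 (n + 1)]
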